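/- Let g and h be integers with g ≥ h ≥ 2 and for a positive integer n set p = p(n) = (1/2) n^{-(g+h-2)/(gh-1)} (equivalently, p is the positive real satisfying 2pn = n^{g+h-1}(2p)^{gh}). Then for all sufficiently large n there exists a set S ⊆ {1,…,n} such that |S| ≥ np/2 and |S_bad| ≤ np/4. -/

import Mathlib

/-- `m` is `(h,g)`-bad for `S`: there are integers `m_1 < ⋯ < m_{g-1} < m` (described here by
a strictly monotone `M : Fin g → ℤ` with largest value `m`) and `0 < ℓ_1 < ⋯ < ℓ_{h-1}`
(described by a strictly monotone `L : Fin h → ℤ` with smallest value `0`) such that the `gh`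
sums `M i + L j` are pairwise distinct elements of `S`. -/
def IsBad (h g : ℕ) (S : Finset ℤ) (m : ℤ) : Prop :=
  ∃ (M : Fin g → ℤ) (L : Fin h → ℤ),
    StrictMono M ∧ StrictMono L ∧
    (∀ i, M i ≤ m) ∧ (∃ i, M i = m) ∧
    (∀ j, 0 ≤ L j) ∧ (∃ j, L j = 0) ∧
    Function.Injective (fun p : Fin g × Fin h => M p.1 + L p.2) ∧
    ∀ (i : Fin g) (j : Fin h), M i + L j ∈ S

open Classical in
/-- The set of `(h,g)`-bad elements of `S`. -/
noncomputable def badSet (h g : ℕ) (S : Finset ℤ) : Finset ℤ :=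
  S.filter (fun m => IsBad h g S m)

open Finset

lemma mem_badSet {h g : ℕ} {S : Finset ℤ} {m : ℤ} :
    m ∈ badSet h g S ↔ m ∈ S ∧ IsBad h g S m := by
  classical
  simp [badSet]

/-- the grid of sums of a witness pair -/
def grid (g h : ℕ) (q : (Fin g → ℤ) × (Fin h → ℤ)) : Finset ℤ :=
  Finset.image (fun ij : Fin g × Fin h => q.1 ij.1 + q.2 ij.2) Finset.univ

open Classical in
/-- the set of potential witnesses -/
noncomputable def Wset (g h n : ℕ) : Finset ((Fin g → ℤ) × (Fin h → ℤ)) :=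
  ((Fintype.piFinset fun _ : Fin g => Finset.Icc (1:ℤ) n) ×ˢ
   (Fintype.piFinset fun j : Fin h => if j.val = 0 then {(0:ℤ)} else Finset.Icc 0 ((n:ℤ)-1))).filter
  (fun q => Function.Injective (fun ij : Fin g × Fin h => q.1 ij.1 + q.2 ij.2))

lemma Wset_card_le (g h n : ℕ) (hh : 1 ≤ h) :
    (Wset g h n).card ≤ n ^ g * n ^ (h - 1) := by
  classical
  refine (Finset.card_filter_le _ _).trans ?_
  rw [Finset.card_product, Fintype.card_piFinset, Fintype.card_piFinset]
  have h1 : ∀ i : Fin g, (Finset.Icc (1:ℤ) n).card = n := by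
    intro i; rw [Int.card_Icc]; simp
  have h2 : ∏ i : Fin g, (Finset.Icc (1:ℤ) n).card = n ^ g := by
    simp [h1, Finset.prod_const, Finset.card_univ]
  rw [h2]
  refine Nat.mul_le_mul_left _ ?_
  have : ∏ j : Fin h, (if j.val = 0 then ({(0:ℤ)} : Finset ℤ) else Finset.Icc 0 ((n:ℤ)-1)).card
      = ∏ j : Fin h, (if j.val = 0 then 1 else n) := by
    refine Finset.prod_congr rfl fun j _ => ?_
    split
    · simp
    · rw [Int.card_Icc]; simp
  rw [this]
  rw [Finset.prod_ite, Finset.prod_const_one, one_mul, Finset.prod_const]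
  have hc : (Finset.univ.filter fun j : Fin h => ¬ j.val = 0).card = h - 1 := by
    have h1 : (Finset.univ.filter fun j : Fin h => j.val = 0).card = 1 := by
      rw [Finset.card_eq_one]
      exact ⟨⟨0, by omega⟩, by ext j; simp [Fin.ext_iff]⟩
    have h2 := Finset.card_filter_add_card_filter_not
      (s := (Finset.univ : Finset (Fin h))) (p := fun j => j.val = 0)
    simp only [Finset.card_univ, Fintype.card_fin] at h2
    omega
  rw [hc]


open Classical in
noncomputable def wit (h g : ℕ) (S : Finset ℤ) (m : ℤ) : (Fin g → ℤ) × (Fin h → ℤ) :=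
  if hb : IsBad h g S m then (hb.choose, hb.choose_spec.choose) else (0, 0)

lemma wit_spec {h g : ℕ} {S : Finset ℤ} {m : ℤ} (hb : IsBad h g S m) :
    StrictMono (wit h g S m).1 ∧ StrictMono (wit h g S m).2 ∧
    (∀ i, (wit h g S m).1 i ≤ m) ∧ (∃ i, (wit h g S m).1 i = m) ∧
    (∀ j, 0 ≤ (wit h g S m).2 j) ∧ (∃ j, (wit h g S m).2 j = 0) ∧
    Function.Injective (fun q : Fin g × Fin h => (wit h g S m).1 q.1 + (wit h g S m).2 q.2) ∧
    ∀ (i : Fin g) (j : Fin h), (wit h g S m).1 i + (wit h g S m).2 j ∈ S := by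
  classical
  rw [wit]
  rw [dif_pos hb]
  exact hb.choose_spec.choose_spec

lemma badSet_card_le (g h n : ℕ) (hh : 2 ≤ h) (hgh : h ≤ g) (S : Finset ℤ)
    (hS : S ⊆ Finset.Icc (1:ℤ) n) :
    (badSet h g S).card ≤ ((Wset g h n).filter fun q => grid g h q ⊆ S).card := by
  classical
  have hg2 : 2 ≤ g := hh.trans hgh
  have hh0 : 0 < h := by omega
  have hg0 : 0 < g := by omega
  -- key facts about the witness of a bad element
  have key : ∀ m ∈ badSet h g S, (wit h g S m).2 ⟨0, hh0⟩ = 0 ∧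
      (wit h g S m).1 ⟨g-1, by omega⟩ = m := by
    intro m hm
    obtain ⟨hmS, hb⟩ := mem_badSet.mp hm
    obtain ⟨hM, hL, hMle, ⟨i0, hi0⟩, hLnn, ⟨j0, hj0⟩, hinj, hmem⟩ := wit_spec hb
    constructor
    · have h1 : (wit h g S m).2 ⟨0, hh0⟩ ≤ (wit h g S m).2 j0 :=
        hL.monotone (by exact Fin.mk_le_of_le_val (by omega))
      have h2 := hLnn ⟨0, hh0⟩
      omega
    · have h1 : (wit h g S m).1 i0 ≤ (wit h g S m).1 ⟨g-1, by omega⟩ :=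
        hM.monotone (by exact Fin.le_def.mpr (by simp; omega))
      have h2 := hMle ⟨g-1, by omega⟩
      omega
  refine Finset.card_le_card_of_injOn (wit h g S) ?_ ?_
  · intro m hm
    obtain ⟨hmS, hb⟩ := mem_badSet.mp hm
    obtain ⟨hM, hL, hMle, ⟨i0, hi0⟩, hLnn, ⟨j0, hj0⟩, hinj, hmem⟩ := wit_spec hb
    obtain ⟨hL0, hMg⟩ := key m hm
    rw [Finset.mem_coe]
    simp only [Finset.mem_filter, Wset, Finset.mem_product, Fintype.mem_piFinset]
    refine ⟨⟨⟨?_, ?_⟩, ?_⟩, ?_⟩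
    · intro i
      have := hS (hmem i ⟨0, hh0⟩)
      rw [hL0, add_zero] at this
      exact this
    · intro j
      by_cases hj : j.val = 0
      · have : j = ⟨0, hh0⟩ := Fin.ext hj
        simp [hj, this, hL0]
      · simp only [hj, if_false, Finset.mem_Icc]
        refine ⟨hLnn j, ?_⟩
        have h1 := hS (hmem ⟨0, hg0⟩ j)
        have h2 := hS (hmem ⟨0, hg0⟩ ⟨0, hh0⟩)
        rw [hL0, add_zero] at h2
        simp only [Finset.mem_Icc] at h1 h2
        omega
    · exact hinj
    · intro x hx
      simp only [grid, Finset.mem_image] at hx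
      obtain ⟨ij, _, rfl⟩ := hx
      exact hmem ij.1 ij.2
  · intro m1 hm1 m2 hm2 heq
    have k1 := (key m1 hm1).2
    have k2 := (key m2 hm2).2
    rw [← k1, ← k2, heq]


noncomputable def wt (p : ℝ) (A S : Finset ℤ) : ℝ := p ^ S.card * (1 - p) ^ (A.card - S.card)

lemma sum_wt (p : ℝ) (A : Finset ℤ) : ∑ S ∈ A.powerset, wt p A S = 1 := by
  have := Finset.prod_add (fun _ : ℤ => p) (fun _ : ℤ => (1 - p)) A
  simp only [prod_const] at this
  calc ∑ S ∈ A.powerset, wt p A S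
      = ∑ S ∈ A.powerset, p ^ S.card * (1-p) ^ (A \ S).card := by
        refine Finset.sum_congr rfl fun S hS => ?_
        rw [card_sdiff_of_subset (mem_powerset.mp hS)]; rfl
    _ = (p + (1 - p)) ^ A.card := this.symm
    _ = 1 := by simp

lemma sum_wt_superset (p : ℝ) (A T : Finset ℤ) (hT : T ⊆ A) :
    ∑ S ∈ A.powerset.filter (fun S => T ⊆ S), wt p A S = p ^ T.card := by
  classical
  have key : ∑ S ∈ A.powerset.filter (fun S => T ⊆ S), wt p A S
      = ∑ R ∈ (A \ T).powerset, p ^ T.card * wt p (A \ T) R := by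
    refine Finset.sum_nbij' (fun S => S \ T) (fun R => R ∪ T) ?_ ?_ ?_ ?_ ?_
    · intro S hS
      simp only [mem_filter, mem_powerset] at hS
      exact mem_powerset.mpr (sdiff_subset_sdiff hS.1 le_rfl)
    · intro R hR
      simp only [mem_powerset] at hR
      simp only [mem_filter, mem_powerset]
      exact ⟨union_subset (hR.trans sdiff_subset) hT, subset_union_right⟩
    · intro S hS
      simp only [mem_filter, mem_powerset] at hS
      exact sdiff_union_of_subset hS.2
    · intro R hR
      simp only [mem_powerset] at hR
      have hd : Disjoint R T := disjoint_of_subset_left hR sdiff_disjoint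
      simp only [union_sdiff_distrib, sdiff_self, union_empty,
        sdiff_eq_self_of_disjoint hd, bot_eq_empty]
    · intro S hS
      simp only [mem_filter, mem_powerset] at hS
      unfold wt
      have hTS := card_le_card hS.2
      have hSA := card_le_card hS.1
      have hTA := card_le_card hT
      have h1 : (S \ T).card = S.card - T.card := card_sdiff_of_subset hS.2
      have h2 : (A \ T).card = A.card - T.card := card_sdiff_of_subset hT
      rw [h1, h2]
      have h3 : A.card - T.card - (S.card - T.card) = A.card - S.card := by omega
      rw [h3, ← mul_assoc, ← pow_add]
      congr 2
      omega
  rw [key, ← Finset.mul_sum, sum_wt, mul_one]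

lemma sum_wt_card (p : ℝ) (A : Finset ℤ) :
    ∑ S ∈ A.powerset, wt p A S * S.card = p * A.card := by
  classical
  have hcard : ∀ S ∈ A.powerset, (S.card : ℝ) = ∑ x ∈ A, (if x ∈ S then (1:ℝ) else 0) := by
    intro S hS
    rw [Finset.sum_boole]
    norm_cast
    rw [Finset.filter_mem_eq_inter, Finset.inter_eq_right.mpr (mem_powerset.mp hS)]
  calc ∑ S ∈ A.powerset, wt p A S * S.card
      = ∑ S ∈ A.powerset, ∑ x ∈ A, (if x ∈ S then wt p A S else 0) := by
        refine Finset.sum_congr rfl fun S hS => ?_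
        rw [hcard S hS, Finset.mul_sum]
        exact Finset.sum_congr rfl fun x _ => by split <;> simp
    _ = ∑ x ∈ A, ∑ S ∈ A.powerset, (if x ∈ S then wt p A S else 0) := Finset.sum_comm
    _ = ∑ x ∈ A, p ^ ({x} : Finset ℤ).card := by
        refine Finset.sum_congr rfl fun x _ => ?_
        rw [← sum_wt_superset p A {x} (by simpa using ‹x ∈ A›), Finset.sum_filter]
        simp [singleton_subset_iff]
    _ = p * A.card := by simp [mul_comm]

lemma exp_bad (g h n : ℕ) (hh : 2 ≤ h) (hgh : h ≤ g) (p : ℝ) (hp0 : 0 ≤ p) (hp1 : p ≤ 1) :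
    ∑ S ∈ (Finset.Icc (1:ℤ) n).powerset, wt p (Finset.Icc (1:ℤ) n) S * ((badSet h g S).card : ℝ)
      ≤ ((n:ℝ) ^ g * (n:ℝ) ^ (h - 1)) * p ^ (g * h) := by
  classical
  set A := Finset.Icc (1:ℤ) n with hA
  have hwt0 : ∀ S, 0 ≤ wt p A S := fun S =>
    mul_nonneg (pow_nonneg hp0 _) (pow_nonneg (by linarith) _)
  have hgrid_card : ∀ q ∈ Wset g h n, (grid g h q).card = g * h := by
    intro q hq
    simp only [Wset, Finset.mem_filter] at hq
    rw [grid, Finset.card_image_of_injective _ hq.2]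
    simp [Finset.card_univ]
  calc ∑ S ∈ A.powerset, wt p A S * ((badSet h g S).card : ℝ)
      ≤ ∑ S ∈ A.powerset, wt p A S *
          (((Wset g h n).filter fun q => grid g h q ⊆ S).card : ℝ) := by
        refine Finset.sum_le_sum fun S hS => ?_
        refine mul_le_mul_of_nonneg_left ?_ (hwt0 S)
        exact_mod_cast badSet_card_le g h n hh hgh S (Finset.mem_powerset.mp hS)
    _ = ∑ S ∈ A.powerset, ∑ q ∈ Wset g h n, (if grid g h q ⊆ S then wt p A S else 0) := by
        refine Finset.sum_congr rfl fun S hS => ?_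
        rw [Finset.card_filter]
        push_cast
        rw [Finset.mul_sum]
        refine Finset.sum_congr rfl fun q _ => by split <;> simp
    _ = ∑ q ∈ Wset g h n, ∑ S ∈ A.powerset, (if grid g h q ⊆ S then wt p A S else 0) :=
        Finset.sum_comm
    _ = ∑ q ∈ Wset g h n, ∑ S ∈ A.powerset.filter (fun S => grid g h q ⊆ S), wt p A S := by
        exact Finset.sum_congr rfl fun q _ => (Finset.sum_filter _ _).symm
    _ ≤ ∑ q ∈ Wset g h n, p ^ (g * h) := by
        refine Finset.sum_le_sum fun q hq => ?_
        by_cases hqa : grid g h q ⊆ A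
        · rw [sum_wt_superset p A _ hqa, hgrid_card q hq]
        · have : A.powerset.filter (fun S => grid g h q ⊆ S) = ∅ := by
            refine Finset.filter_false_of_mem fun S hS hc => ?_
            exact hqa (hc.trans (Finset.mem_powerset.mp hS))
          rw [this, Finset.sum_empty]
          positivity
    _ = ((Wset g h n).card : ℝ) * p ^ (g * h) := by rw [Finset.sum_const, nsmul_eq_mul]
    _ ≤ ((n:ℝ) ^ g * (n:ℝ) ^ (h - 1)) * p ^ (g * h) := by
        refine mul_le_mul_of_nonneg_right ?_ (by positivity)
        have := Wset_card_le g h n (by omega)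
        calc ((Wset g h n).card : ℝ) ≤ ((n ^ g * n ^ (h-1) : ℕ) : ℝ) := by exact_mod_cast this
          _ = (n:ℝ) ^ g * (n:ℝ) ^ (h-1) := by push_cast; ring

lemma isBad_mono {h g : ℕ} {S S' : Finset ℤ} (hSS : S' ⊆ S) {m : ℤ}
    (hb : IsBad h g S' m) : IsBad h g S m := by
  obtain ⟨M, L, h1, h2, h3, h4, h5, h6, h7, h8⟩ := hb
  exact ⟨M, L, h1, h2, h3, h4, h5, h6, h7, fun i j => hSS (h8 i j)⟩

/-- With `p = p(n) = (1/2) n^{-(g+h-2)/(gh-1)}`, for all sufficiently large `n` there is a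
set `S ⊆ {1, …, n}` with `|S| ≥ np/2` and `|S_bad| ≤ np/4`. -/
theorem stmt10 (g h : ℕ) (hgh : h ≤ g) (hh : 2 ≤ h)
    (p : ℕ → ℝ)
    (hp : ∀ n : ℕ, p n =
      (1 / 2) * (n : ℝ) ^ (-(((g : ℝ) + (h : ℝ) - 2) / ((g : ℝ) * (h : ℝ) - 1)))) :
    ∃ N : ℕ, ∀ n : ℕ, N ≤ n →
      ∃ S : Finset ℤ, ↑S ⊆ Set.Icc (1 : ℤ) n ∧
        (n : ℝ) * p n / 2 ≤ (S.card : ℝ) ∧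
        ((badSet h g S).card : ℝ) ≤ (n : ℝ) * p n / 4 := by
  classical
  refine ⟨1, fun n hn => ?_⟩
  have hg2 : 2 ≤ g := hh.trans hgh
  have hn0 : (0:ℝ) < n := by exact_mod_cast (by omega : 0 < n)
  have hn1 : (1:ℝ) ≤ n := by exact_mod_cast hn
  set α : ℝ := ((g : ℝ) + (h : ℝ) - 2) / ((g : ℝ) * (h : ℝ) - 1) with hα
  have hgR : (2:ℝ) ≤ g := by exact_mod_cast hg2
  have hhR : (2:ℝ) ≤ h := by exact_mod_cast hh
  have hden : (0:ℝ) < (g:ℝ) * (h:ℝ) - 1 := by nlinarith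
  have hα0 : 0 ≤ α := div_nonneg (by linarith) hden.le
  have hppos : 0 < p n := by
    rw [hp n]
    have := Real.rpow_pos_of_pos hn0 (-α)
    positivity
  have hple : p n ≤ 1/2 := by
    rw [hp n]
    have h1 : (n:ℝ) ^ (-α) ≤ 1 :=
      Real.rpow_le_one_of_one_le_of_nonpos hn1 (by linarith)
    linarith
  have hp1 : p n ≤ 1 := by linarith
  -- the key arithmetic bound
  have hkey : ((n:ℝ) ^ g * (n:ℝ) ^ (h - 1)) * (p n) ^ (g * h) ≤ (n:ℝ) * p n / 2 := by
    have e1 : (p n) ^ (g * h) = (1/2:ℝ) ^ (g*h) * (n:ℝ) ^ (-(α * (g*h : ℕ))) := by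
      rw [hp n, mul_pow]
      congr 1
      rw [← Real.rpow_natCast ((n:ℝ) ^ (-α)) (g*h), ← Real.rpow_mul hn0.le]
      ring_nf
    have e2 : (n:ℝ) ^ g * (n:ℝ) ^ (h - 1) = (n:ℝ) ^ (((g + (h-1) : ℕ)) : ℝ) := by
      rw [Real.rpow_natCast, pow_add]
    have e3 : (((g + (h-1) : ℕ)) : ℝ) + (-(α * (g*h : ℕ))) = 1 + (-α) := by
      have hc : α * ((g:ℝ) * (h:ℝ) - 1) = (g:ℝ) + (h:ℝ) - 2 :=
        div_mul_cancel₀ _ hden.ne'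
      push_cast [Nat.cast_sub (by omega : 1 ≤ h)]
      nlinarith [hc]
    have e4 : ((n:ℝ) ^ g * (n:ℝ) ^ (h - 1)) * (p n) ^ (g * h)
        = (1/2:ℝ) ^ (g*h) * ((n:ℝ) ^ ((1:ℝ) + (-α))) := by
      rw [e1, e2, ← e3, Real.rpow_add hn0]
      ring
    rw [e4, Real.rpow_add hn0, Real.rpow_one]
    have e5 : (n:ℝ) * p n / 2 = (1/4 : ℝ) * ((n:ℝ) * (n:ℝ) ^ (-α)) := by
      rw [hp n]; ring
    rw [e5]
    have h6 : (1/2:ℝ) ^ (g*h) ≤ 1/4 := by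
      have : (1/2:ℝ) ^ (g*h) ≤ (1/2:ℝ) ^ 2 :=
        pow_le_pow_of_le_one (by norm_num) (by norm_num) (by nlinarith)
      norm_num at this ⊢
      linarith
    have h7 : 0 ≤ (n:ℝ) * (n:ℝ) ^ (-α) := by positivity
    nlinarith
  -- expectation argument
  set A := Finset.Icc (1:ℤ) n with hAdef
  have hAcard : (A.card : ℝ) = n := by
    rw [hAdef, Int.card_Icc]
    simp
  have hEcard : ∑ S ∈ A.powerset, wt (p n) A S * (S.card : ℝ) = (n:ℝ) * p n := by
    rw [sum_wt_card, hAcard, mul_comm]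
  have hEbad := exp_bad g h n hh hgh (p n) hppos.le hp1
  have hEF : (n:ℝ) * p n / 2 ≤
      ∑ S ∈ A.powerset, wt (p n) A S * ((S.card : ℝ) - ((badSet h g S).card : ℝ)) := by
    have : ∑ S ∈ A.powerset, wt (p n) A S * ((S.card : ℝ) - ((badSet h g S).card : ℝ))
        = (∑ S ∈ A.powerset, wt (p n) A S * (S.card : ℝ))
          - ∑ S ∈ A.powerset, wt (p n) A S * ((badSet h g S).card : ℝ) := by
      rw [← Finset.sum_sub_distrib]
      exact Finset.sum_congr rfl fun S _ => by ring
    rw [this, hEcard]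
    have := hEbad
    linarith [hkey]
  -- extract a good S
  have hsum1 : ∑ S ∈ A.powerset, ((n:ℝ) * p n / 2) * wt (p n) A S = (n:ℝ) * p n / 2 := by
    rw [← Finset.mul_sum, sum_wt, mul_one]
  have hex : ∃ S ∈ A.powerset, ((n:ℝ) * p n / 2) * wt (p n) A S
      ≤ wt (p n) A S * ((S.card : ℝ) - ((badSet h g S).card : ℝ)) := by
    refine Finset.exists_le_of_sum_le ⟨∅, by simp⟩ ?_
    rw [hsum1]
    exact hEF
  obtain ⟨S0, hS0mem, hS0⟩ := hex
  have hS0A : S0 ⊆ A := Finset.mem_powerset.mp hS0mem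
  have hwtpos : 0 < wt (p n) A S0 := by
    unfold wt
    have : (0:ℝ) < 1 - p n := by linarith
    positivity
  have hgood : (n:ℝ) * p n / 2 ≤ (S0.card : ℝ) - ((badSet h g S0).card : ℝ) := by
    rw [mul_comm] at hS0
    exact le_of_mul_le_mul_left hS0 hwtpos
  -- delete bad elements
  refine ⟨S0 \ badSet h g S0, ?_, ?_, ?_⟩
  · intro x hx
    simp only [Finset.coe_sdiff, Set.mem_diff] at hx
    have := hS0A hx.1
    rwa [hAdef, ← Finset.coe_Icc] at *
    
  · have hsub : badSet h g S0 ⊆ S0 := Finset.filter_subset _ _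
    rw [Finset.card_sdiff_of_subset hsub, Nat.cast_sub (Finset.card_le_card hsub)]
    exact hgood
  · have hempty : badSet h g (S0 \ badSet h g S0) = ∅ := by
      rw [Finset.eq_empty_iff_forall_notMem]
      intro m hm
      obtain ⟨hm1, hm2⟩ := mem_badSet.mp hm
      have hm3 : m ∈ S0 := (Finset.sdiff_subset) hm1
      have hm4 : IsBad h g S0 m := isBad_mono Finset.sdiff_subset hm2
      have : m ∈ badSet h g S0 := mem_badSet.mpr ⟨hm3, hm4⟩
      exact (Finset.mem_sdiff.mp hm1).2 this
    rw [hempty]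
    simp only [Finset.card_empty, Nat.cast_zero]
    positivity
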